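/- Let k ≥ 2 and let −d ≤ d_1* < … < d_k* ≤ d with minimal gap d_min*, and a_1*, …, a_k* real with |a_j*| ≥ m > 0. Let −d ≤ d_1 < … < d_k ≤ d be any nodes and a ∈ ℝ^k any coefficients such that ‖A·a − A*·a*‖₂ < σ, where A and A* are the (2k)×k matrices with entries d_j^(i−1) and (d_j*)^(i−1), i = 1,…,2k, respectively. Then the vector η with components η_j = Π_{q=1}^{k}(d_j* − d_q) satisfies ‖η‖_∞ < (1+d)^(2k−1)·σ / (ζ(k)·(d_min*)^(k−1)·m), where ζ(k) = (k/2)!·((k−2)/2)! for even k and (((k−1)/2)!)² for odd k. -/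

import Mathlib

open Matrix

/-- ζ(k) = (k/2)!·((k-2)/2)! for even k and (((k-1)/2)!)² for odd k. -/
noncomputable def paperZeta (n : ℕ) : ℝ :=
  if Even n then (Nat.factorial (n / 2) : ℝ) * (Nat.factorial ((n - 2) / 2) : ℝ)
  else ((Nat.factorial ((n - 1) / 2) : ℝ)) ^ 2


section AuxStmt18
open Polynomial Finset

lemma auxPB_deg {ι : Type*} (s : Finset ι) (r : ι → ℝ) :
    (∏ t ∈ s, (X - C (r t))).natDegree ≤ s.card := by
  refine le_trans (Polynomial.natDegree_prod_le s _) ?_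
  simp [Polynomial.natDegree_X_sub_C]

lemma auxPB_l1 {ι : Type*} [DecidableEq ι] (s : Finset ι) (r : ι → ℝ) :
    ∑ i ∈ Finset.range (s.card + 1), |(∏ t ∈ s, (X - C (r t))).coeff i| ≤
      ∏ t ∈ s, (1 + |r t|) := by
  classical
  induction s using Finset.induction with
  | empty => simp
  | @insert a s ha ih =>
    set P : Polynomial ℝ := ∏ t ∈ s, (X - C (r t)) with hP
    have hprod : ∏ t ∈ insert a s, (X - C (r t)) = (X - C (r a)) * P := by
      rw [Finset.prod_insert ha]
    have hcard : (insert a s).card = s.card + 1 := Finset.card_insert_of_notMem ha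
    have hdeg : P.natDegree ≤ s.card := auxPB_deg s r
    have hco : ∀ i, ((X - C (r a)) * P).coeff i = (X * P).coeff i - r a * P.coeff i := by
      intro i
      rw [sub_mul, Polynomial.coeff_sub, Polynomial.coeff_C_mul]
    have hXP0 : (X * P).coeff 0 = 0 := by
      simp [Polynomial.mul_coeff_zero]
    have step : ∀ i, |((X - C (r a)) * P).coeff i| ≤ |(X * P).coeff i| + |r a| * |P.coeff i| := by
      intro i
      rw [hco i]
      refine le_trans (abs_sub _ _) ?_
      rw [abs_mul]
    calc ∑ i ∈ Finset.range ((insert a s).card + 1), |(∏ t ∈ insert a s, (X - C (r t))).coeff i|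
        ≤ ∑ i ∈ Finset.range (s.card + 1 + 1), (|(X * P).coeff i| + |r a| * |P.coeff i|) := by
          rw [hprod, hcard]
          exact Finset.sum_le_sum fun i _ => step i
      _ = (∑ i ∈ Finset.range (s.card + 1 + 1), |(X * P).coeff i|)
          + |r a| * ∑ i ∈ Finset.range (s.card + 1 + 1), |P.coeff i| := by
          rw [Finset.sum_add_distrib, Finset.mul_sum]
      _ ≤ (∑ i ∈ Finset.range (s.card + 1), |P.coeff i|)
          + |r a| * ∑ i ∈ Finset.range (s.card + 1), |P.coeff i| := by
          have h1 : ∑ i ∈ Finset.range (s.card + 1 + 1), |(X * P).coeff i|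
              = ∑ i ∈ Finset.range (s.card + 1), |P.coeff i| := by
            have h0 := Finset.sum_range_succ' (fun i => |(X * P).coeff i|) (s.card + 1)
            rw [h0]
            simp [hXP0, Polynomial.coeff_X_mul]
          have h2 : ∑ i ∈ Finset.range (s.card + 1 + 1), |P.coeff i|
              = ∑ i ∈ Finset.range (s.card + 1), |P.coeff i| := by
            rw [Finset.sum_range_succ]
            have : P.coeff (s.card + 1) = 0 :=
              Polynomial.coeff_eq_zero_of_natDegree_lt (by omega)
            simp [this]
          rw [h1, h2]
      _ = (1 + |r a|) * ∑ i ∈ Finset.range (s.card + 1), |P.coeff i| := by ring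
      _ ≤ (1 + |r a|) * ∏ t ∈ s, (1 + |r t|) := by
          refine mul_le_mul_of_nonneg_left ih ?_
          positivity
      _ = ∏ t ∈ insert a s, (1 + |r t|) := by rw [Finset.prod_insert ha]


lemma auxFact (n j : ℕ) (hj : j ≤ n) :
    Nat.factorial (n / 2) * Nat.factorial (n - n / 2) ≤
      Nat.factorial j * Nat.factorial (n - j) := by
  have hpos : 0 < n.choose (n / 2) := Nat.choose_pos (Nat.div_le_self n 2)
  refine Nat.le_of_mul_le_mul_left ?_ hpos
  calc n.choose (n / 2) * (Nat.factorial (n / 2) * Nat.factorial (n - n / 2))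
      = Nat.factorial n := by
        rw [← mul_assoc]; exact Nat.choose_mul_factorial_mul_factorial (Nat.div_le_self n 2)
    _ = n.choose j * (Nat.factorial j * Nat.factorial (n - j)) := by
        rw [← mul_assoc]; exact (Nat.choose_mul_factorial_mul_factorial hj).symm
    _ ≤ n.choose (n / 2) * (Nat.factorial j * Nat.factorial (n - j)) :=
        Nat.mul_le_mul_right _ (Nat.choose_le_middle j n)

lemma auxZeta (k : ℕ) (hk : 2 ≤ k) :
    paperZeta k = (Nat.factorial ((k - 1) / 2) : ℝ) *
      (Nat.factorial ((k - 1) - (k - 1) / 2) : ℝ) := by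
  rcases Nat.even_or_odd k with h | h
  · obtain ⟨t, ht⟩ := h
    have h1 : (k - 1) / 2 = (k - 2) / 2 := by omega
    have h2 : (k - 1) - (k - 1) / 2 = k / 2 := by omega
    rw [paperZeta, if_pos ⟨t, ht⟩, h2, h1, mul_comm]
  · have hne : ¬ Even k := Nat.not_even_iff_odd.mpr h
    have h2 : (k - 1) - (k - 1) / 2 = (k - 1) / 2 := by
      obtain ⟨t, ht⟩ := h; omega
    rw [paperZeta, if_neg hne, h2, sq]

lemma auxZetaPos (k : ℕ) (hk : 2 ≤ k) : 0 < paperZeta k := by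
  rw [auxZeta k hk]
  positivity

-- product of Nat.dist over erase = factorials
lemma auxDistProd (k : ℕ) (j : Fin k) :
    ∏ i ∈ (univ : Finset (Fin k)).erase j, Nat.dist j.val i.val =
      Nat.factorial j.val * Nat.factorial (k - 1 - j.val) := by
  have hmap : ((univ : Finset (Fin k)).erase j).map Fin.valEmbedding =
      (Finset.range k).erase j.val := by
    rw [Finset.map_erase, Fin.map_valEmbedding_univ, Nat.Iio_eq_range]
    rfl
  have h1 : ∏ i ∈ (univ : Finset (Fin k)).erase j, Nat.dist j.val i.val =
      ∏ i ∈ (Finset.range k).erase j.val, Nat.dist j.val i := by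
    rw [← hmap, Finset.prod_map]
    rfl
  rw [h1]
  have hsplit : (Finset.range k).erase j.val =
      Finset.range j.val ∪ Finset.Ico (j.val + 1) k := by
    ext x
    simp only [Finset.mem_erase, Finset.mem_range, Finset.mem_union, Finset.mem_Ico]
    omega
  have hdisj : Disjoint (Finset.range j.val) (Finset.Ico (j.val + 1) k) := by
    rw [Finset.disjoint_left]
    intro x hx hx'
    simp only [Finset.mem_range] at hx
    simp only [Finset.mem_Ico] at hx'
    omega
  rw [hsplit, Finset.prod_union hdisj]
  have hL : ∏ i ∈ Finset.range j.val, Nat.dist j.val i = Nat.factorial j.val := by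
    have : ∀ i ∈ Finset.range j.val, Nat.dist j.val i = j.val - i := by
      intro i hi
      simp only [Finset.mem_range] at hi
      exact Nat.dist_eq_sub_of_le_right (le_of_lt hi)
    rw [Finset.prod_congr rfl this, ← Nat.descFactorial_eq_prod_range,
      Nat.descFactorial_self]
  have hR : ∏ i ∈ Finset.Ico (j.val + 1) k, Nat.dist j.val i =
      Nat.factorial (k - 1 - j.val) := by
    have : ∀ i ∈ Finset.Ico (j.val + 1) k, Nat.dist j.val i = i - j.val := by
      intro i hi
      simp only [Finset.mem_Ico] at hi
      exact Nat.dist_eq_sub_of_le (by omega)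
    rw [Finset.prod_congr rfl this, Finset.prod_Ico_eq_prod_range]
    have h2 : ∀ i ∈ Finset.range (k - (j.val + 1)), j.val + 1 + i - j.val = i + 1 := by
      intro i _; omega
    rw [Finset.prod_congr rfl h2]
    have h3 : k - (j.val + 1) = k - 1 - j.val := by omega
    rw [h3]
    exact Finset.prod_range_add_one_eq_factorial _
  rw [hL, hR]

lemma auxGapAux (k : ℕ) (dstar : Fin k → ℝ) (hmonos : StrictMono dstar) (dmin : ℝ)
    (hlb : ∀ i j : Fin k, i ≠ j → dmin ≤ |dstar i - dstar j|) :
    ∀ (n : ℕ) (i j : Fin k), i.val + n = j.val → (n : ℝ) * dmin ≤ dstar j - dstar i := by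
  intro n
  induction n with
  | zero =>
    intro i j h
    have : i = j := Fin.ext (by omega)
    subst this
    simp
  | succ n ih =>
    intro i j h
    have hik : i.val + 1 < k := by omega
    set i' : Fin k := ⟨i.val + 1, hik⟩ with hi'
    have h1 : (n : ℝ) * dmin ≤ dstar j - dstar i' := ih i' j (by simp [hi']; omega)
    have hii' : i < i' := by
      rw [Fin.lt_def]; simp [hi']
    have h2 : dmin ≤ dstar i' - dstar i := by
      have := hlb i i' (ne_of_lt hii')
      rwa [abs_sub_comm, abs_of_pos (sub_pos.mpr (hmonos hii'))] at this
    push_cast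
    linarith

lemma auxGap (k : ℕ) (dstar : Fin k → ℝ) (hmonos : StrictMono dstar) (dmin : ℝ)
    (hlb : ∀ i j : Fin k, i ≠ j → dmin ≤ |dstar i - dstar j|)
    (i j : Fin k) (hne : i ≠ j) :
    (Nat.dist j.val i.val : ℝ) * dmin ≤ |dstar j - dstar i| := by
  rcases lt_or_gt_of_ne hne with hlt | hgt
  · have hd : Nat.dist j.val i.val = j.val - i.val := Nat.dist_eq_sub_of_le_right (le_of_lt hlt)
    have := auxGapAux k dstar hmonos dmin hlb (j.val - i.val) i j (by omega)
    rw [hd, abs_of_pos (sub_pos.mpr (hmonos hlt))]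
    exact this
  · have hd : Nat.dist j.val i.val = i.val - j.val := Nat.dist_eq_sub_of_le (le_of_lt hgt)
    have := auxGapAux k dstar hmonos dmin hlb (i.val - j.val) j i (by omega)
    rw [hd, abs_sub_comm, abs_of_pos (sub_pos.mpr (hmonos hgt))]
    exact this

end AuxStmt18

open Polynomial Finset

/-- Stability of nonlinear approximation in Vandermonde space: if two sparse combinations of
Vandermonde vectors of length `2k` are `σ`-close in `ℓ²`, then each true node `d*_j` has a
small product of distances to the recovered nodes `d_1,…,d_k`. -/
theorem stmt_18 (k : ℕ) (hk : 2 ≤ k) (d : ℝ) (dstar : Fin k → ℝ) (hmonos : StrictMono dstar)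
    (hinstar : ∀ j, -d ≤ dstar j ∧ dstar j ≤ d) (dmin : ℝ)
    (hdmin : IsLeast {x : ℝ | ∃ i j : Fin k, i ≠ j ∧ x = |dstar i - dstar j|} dmin)
    (m : ℝ) (hm : 0 < m) (astar : Fin k → ℝ) (ha : ∀ j, m ≤ |astar j|)
    (dd : Fin k → ℝ) (hmono : StrictMono dd) (hin : ∀ p, -d ≤ dd p ∧ dd p ≤ d)
    (a : Fin k → ℝ) (σ : ℝ)
    (hclose : Real.sqrt (∑ i : Fin (2 * k),
        (((Matrix.of fun (i : Fin (2 * k)) (p : Fin k) => dd p ^ (i : ℕ)).mulVec a -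
          (Matrix.of fun (i : Fin (2 * k)) (j : Fin k) =>
            dstar j ^ (i : ℕ)).mulVec astar) i) ^ 2) < σ) :
    Finset.univ.sup' ⟨(⟨0, by omega⟩ : Fin k), Finset.mem_univ _⟩
        (fun j => |∏ q : Fin k, (dstar j - dd q)|) <
      (1 + d) ^ (2 * k - 1) * σ / (paperZeta k * dmin ^ (k - 1) * m) := by
  classical
  set e : Fin (2 * k) → ℝ :=
    (Matrix.of fun (i : Fin (2 * k)) (p : Fin k) => dd p ^ (i : ℕ)).mulVec a -
      (Matrix.of fun (i : Fin (2 * k)) (j : Fin k) => dstar j ^ (i : ℕ)).mulVec astar with he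
  have hd0 : 0 ≤ d := by
    have h := hinstar ⟨0, by omega⟩; linarith [h.1, h.2]
  have hdminpos : 0 < dmin := by
    obtain ⟨⟨i, j, hij, hx⟩, -⟩ := hdmin
    rw [hx]
    exact abs_pos.mpr (sub_ne_zero.mpr fun h => hij (hmonos.injective h))
  have hlb : ∀ i j : Fin k, i ≠ j → dmin ≤ |dstar i - dstar j| := fun i j hij =>
    hdmin.2 ⟨i, j, hij, rfl⟩
  have hσ : 0 < σ := lt_of_le_of_lt (Real.sqrt_nonneg _) hclose
  have hεnn : 0 ≤ Real.sqrt (∑ i : Fin (2 * k), e i ^ 2) := Real.sqrt_nonneg _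
  have hζpos : 0 < paperZeta k := auxZetaPos k hk
  have hDpos : 0 < paperZeta k * dmin ^ (k - 1) * m := by positivity
  have h1d : (0:ℝ) < (1 + d) ^ (2 * k - 1) := by positivity
  have hei : ∀ i : Fin (2 * k),
      e i = (∑ p : Fin k, dd p ^ (i : ℕ) * a p) - ∑ l : Fin k, dstar l ^ (i : ℕ) * astar l := by
    intro i
    simp [he, Matrix.mulVec, dotProduct]
  refine (Finset.sup'_lt_iff _).mpr ?_
  intro j _
  -- the test polynomial
  set s : Finset (Fin k ⊕ Fin k) := (univ : Finset (Fin k)).disjSum (univ.erase j) with hs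
  set R : Polynomial ℝ := ∏ t ∈ s, (X - C (Sum.elim dd dstar t)) with hRdef
  have hcard : s.card = 2 * k - 1 := by
    rw [hs, Finset.card_disjSum, Finset.card_erase_of_mem (mem_univ j), Finset.card_univ,
      Fintype.card_fin]
    omega
  have hdeg : R.natDegree < 2 * k := by
    have := auxPB_deg s (Sum.elim dd dstar)
    rw [hcard] at this
    rw [hRdef]
    omega
  have hR : R = (∏ p : Fin k, (X - C (dd p))) * ∏ i ∈ univ.erase j, (X - C (dstar i)) := by
    rw [hRdef, hs, Finset.prod_disjSum]
    simp only [Sum.elim_inl, Sum.elim_inr]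
  have heval : ∀ x : ℝ, R.eval x =
      (∏ p : Fin k, (x - dd p)) * ∏ i ∈ univ.erase j, (x - dstar i) := by
    intro x
    rw [hR]
    simp [Polynomial.eval_prod]
  have hRdd : ∀ p : Fin k, R.eval (dd p) = 0 := by
    intro p
    rw [heval]
    have : ∏ q : Fin k, (dd p - dd q) = 0 :=
      Finset.prod_eq_zero (mem_univ p) (sub_self _)
    rw [this, zero_mul]
  have hRds : ∀ l : Fin k, l ≠ j → R.eval (dstar l) = 0 := by
    intro l hl
    rw [heval]
    have : ∏ i ∈ univ.erase j, (dstar l - dstar i) = 0 :=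
      Finset.prod_eq_zero (Finset.mem_erase.mpr ⟨hl, mem_univ l⟩) (sub_self _)
    rw [this, mul_zero]
  have hev : ∀ x : ℝ, ∑ i : Fin (2 * k), R.coeff (i : ℕ) * x ^ (i : ℕ) = R.eval x := by
    intro x
    rw [Polynomial.eval_eq_sum_range' hdeg x, ← Fin.sum_univ_eq_sum_range]
  -- key identity
  have key : ∑ i : Fin (2 * k), R.coeff (i : ℕ) * e i = -(astar j * R.eval (dstar j)) := by
    have hsw : ∀ (f : Fin k → ℝ) (b : Fin k → ℝ),
        ∑ i : Fin (2 * k), ∑ p : Fin k, R.coeff (i : ℕ) * (f p ^ (i : ℕ) * b p)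
          = ∑ p : Fin k, R.eval (f p) * b p := by
      intro f b
      rw [Finset.sum_comm]
      refine Finset.sum_congr rfl fun p _ => ?_
      rw [← hev (f p), Finset.sum_mul]
      exact Finset.sum_congr rfl fun i _ => by ring
    calc ∑ i : Fin (2 * k), R.coeff (i : ℕ) * e i
        = ∑ i : Fin (2 * k), (∑ p : Fin k, R.coeff (i : ℕ) * (dd p ^ (i : ℕ) * a p)
            - ∑ l : Fin k, R.coeff (i : ℕ) * (dstar l ^ (i : ℕ) * astar l)) := by
          refine Finset.sum_congr rfl fun i _ => ?_
          rw [hei i, mul_sub, Finset.mul_sum, Finset.mul_sum]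
      _ = (∑ p : Fin k, R.eval (dd p) * a p) - ∑ l : Fin k, R.eval (dstar l) * astar l := by
          rw [Finset.sum_sub_distrib, hsw dd a, hsw dstar astar]
      _ = -(astar j * R.eval (dstar j)) := by
          have h1 : ∑ p : Fin k, R.eval (dd p) * a p = 0 :=
            Finset.sum_eq_zero fun p _ => by rw [hRdd p, zero_mul]
          have h2 : ∑ l : Fin k, R.eval (dstar l) * astar l = R.eval (dstar j) * astar j := by
            refine Finset.sum_eq_single j (fun l _ hl => by rw [hRds l hl, zero_mul]) ?_
            intro h; exact absurd (mem_univ j) h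
          rw [h1, h2]; ring
  -- Cauchy-Schwarz and ℓ¹ bound
  have hcs : |∑ i : Fin (2 * k), R.coeff (i : ℕ) * e i| ≤
      Real.sqrt (∑ i : Fin (2 * k), R.coeff (i : ℕ) ^ 2) *
        Real.sqrt (∑ i : Fin (2 * k), e i ^ 2) := by
    rw [← Real.sqrt_sq_eq_abs, ← Real.sqrt_mul (by positivity)]
    exact Real.sqrt_le_sqrt (Finset.sum_mul_sq_le_sq_mul_sq univ _ _)
  have hl2l1 : Real.sqrt (∑ i : Fin (2 * k), R.coeff (i : ℕ) ^ 2) ≤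
      ∑ i ∈ Finset.range (2 * k), |R.coeff i| := by
    have h1 : ∑ i : Fin (2 * k), R.coeff (i : ℕ) ^ 2 ≤
        (∑ i : Fin (2 * k), |R.coeff (i : ℕ)|) ^ 2 := by
      have := Finset.sum_sq_le_sq_sum_of_nonneg
        (f := fun i : Fin (2 * k) => |R.coeff (i : ℕ)|) (s := univ) (fun i _ => abs_nonneg _)
      simpa [sq_abs] using this
    calc Real.sqrt (∑ i : Fin (2 * k), R.coeff (i : ℕ) ^ 2)
        ≤ Real.sqrt ((∑ i : Fin (2 * k), |R.coeff (i : ℕ)|) ^ 2) := Real.sqrt_le_sqrt h1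
      _ = ∑ i : Fin (2 * k), |R.coeff (i : ℕ)| := by
          rw [Real.sqrt_sq (Finset.sum_nonneg fun i _ => abs_nonneg _)]
      _ = ∑ i ∈ Finset.range (2 * k), |R.coeff i| :=
          Fin.sum_univ_eq_sum_range (fun i => |R.coeff i|) (2 * k)
  have hl1 : ∑ i ∈ Finset.range (2 * k), |R.coeff i| ≤ (1 + d) ^ (2 * k - 1) := by
    have h2k : Finset.range (2 * k) = Finset.range (s.card + 1) := by rw [hcard]; congr 1; omega
    rw [h2k, hRdef]
    refine le_trans (auxPB_l1 s (Sum.elim dd dstar)) ?_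
    have hb : ∀ t ∈ s, 1 + |Sum.elim dd dstar t| ≤ 1 + d := by
      intro t _
      rcases t with p | i
      · have := hin p
        simp only [Sum.elim_inl]
        have : |dd p| ≤ d := abs_le.mpr ⟨(hin p).1, (hin p).2⟩
        linarith
      · simp only [Sum.elim_inr]
        have : |dstar i| ≤ d := abs_le.mpr ⟨(hinstar i).1, (hinstar i).2⟩
        linarith
    calc ∏ t ∈ s, (1 + |Sum.elim dd dstar t|) ≤ ∏ t ∈ s, (1 + d) :=
          Finset.prod_le_prod (fun t _ => by positivity) hb
      _ = (1 + d) ^ (2 * k - 1) := by rw [Finset.prod_const, hcard]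
  -- lower bound on the gap product
  have hgaps : paperZeta k * dmin ^ (k - 1) ≤ ∏ i ∈ univ.erase j, |dstar j - dstar i| := by
    have step1 : ∏ i ∈ univ.erase j, ((Nat.dist j.val i.val : ℝ) * dmin) ≤
        ∏ i ∈ univ.erase j, |dstar j - dstar i| := by
      refine Finset.prod_le_prod (fun i _ => by positivity) ?_
      intro i hi
      have hij : i ≠ j := (Finset.mem_erase.mp hi).1
      exact auxGap k dstar hmonos dmin hlb i j hij
    have step2 : ∏ i ∈ univ.erase j, ((Nat.dist j.val i.val : ℝ) * dmin) =
        ((∏ i ∈ univ.erase j, Nat.dist j.val i.val : ℕ) : ℝ) * dmin ^ (k - 1) := by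
      rw [Finset.prod_mul_distrib, Finset.prod_const,
        Finset.card_erase_of_mem (mem_univ j), Finset.card_univ, Fintype.card_fin]
      push_cast
      ring
    have step3 : paperZeta k ≤ ((∏ i ∈ univ.erase j, Nat.dist j.val i.val : ℕ) : ℝ) := by
      rw [auxDistProd k j, auxZeta k hk]
      have hjk : j.val ≤ k - 1 := by omega
      have := auxFact (k - 1) j.val hjk
      push_cast
      exact_mod_cast Nat.cast_le.mpr this
    calc paperZeta k * dmin ^ (k - 1)
        ≤ ((∏ i ∈ univ.erase j, Nat.dist j.val i.val : ℕ) : ℝ) * dmin ^ (k - 1) := by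
          refine mul_le_mul_of_nonneg_right step3 (by positivity)
      _ = ∏ i ∈ univ.erase j, ((Nat.dist j.val i.val : ℝ) * dmin) := step2.symm
      _ ≤ ∏ i ∈ univ.erase j, |dstar j - dstar i| := step1
  -- put it together
  have habs : |astar j * R.eval (dstar j)| =
      |astar j| * |∏ q : Fin k, (dstar j - dd q)| * ∏ i ∈ univ.erase j, |dstar j - dstar i| := by
    rw [heval, abs_mul, abs_mul, ← mul_assoc]
    congr 1
    exact Finset.abs_prod _ _
  have hub : |astar j * R.eval (dstar j)| < (1 + d) ^ (2 * k - 1) * σ := by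
    have h0 : |astar j * R.eval (dstar j)| = |∑ i : Fin (2 * k), R.coeff (i : ℕ) * e i| := by
      rw [key, abs_neg]
    rw [h0]
    calc |∑ i : Fin (2 * k), R.coeff (i : ℕ) * e i|
        ≤ Real.sqrt (∑ i : Fin (2 * k), R.coeff (i : ℕ) ^ 2) *
            Real.sqrt (∑ i : Fin (2 * k), e i ^ 2) := hcs
      _ ≤ (1 + d) ^ (2 * k - 1) * Real.sqrt (∑ i : Fin (2 * k), e i ^ 2) :=
          mul_le_mul_of_nonneg_right (le_trans hl2l1 hl1) hεnn
      _ < (1 + d) ^ (2 * k - 1) * σ := by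
          exact mul_lt_mul_of_pos_left hclose h1d
  have hlow : m * (paperZeta k * dmin ^ (k - 1)) * |∏ q : Fin k, (dstar j - dd q)| ≤
      |astar j * R.eval (dstar j)| := by
    rw [habs]
    have hT : (0:ℝ) ≤ |∏ q : Fin k, (dstar j - dd q)| := abs_nonneg _
    have h1 : m * (paperZeta k * dmin ^ (k - 1)) ≤
        |astar j| * ∏ i ∈ univ.erase j, |dstar j - dstar i| :=
      mul_le_mul (ha j) hgaps (by positivity) (abs_nonneg _)
    calc m * (paperZeta k * dmin ^ (k - 1)) * |∏ q : Fin k, (dstar j - dd q)|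
        ≤ (|astar j| * ∏ i ∈ univ.erase j, |dstar j - dstar i|) *
            |∏ q : Fin k, (dstar j - dd q)| := mul_le_mul_of_nonneg_right h1 hT
      _ = |astar j| * |∏ q : Fin k, (dstar j - dd q)| *
            ∏ i ∈ univ.erase j, |dstar j - dstar i| := by ring
  rw [lt_div_iff₀ hDpos]
  calc |∏ q : Fin k, (dstar j - dd q)| * (paperZeta k * dmin ^ (k - 1) * m)
      = m * (paperZeta k * dmin ^ (k - 1)) * |∏ q : Fin k, (dstar j - dd q)| := by ring
    _ ≤ |astar j * R.eval (dstar j)| := hlow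
    _ < (1 + d) ^ (2 * k - 1) * σ := hub
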